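/- Let k be a finite field of q elements, char(k) = p > d, V a finite-dimensional k-vector space, P : V → k a polynomial of degree ≤ d, and W ⊆ V an affine subspace of codimension s. Then the Schmidt rank of the restriction P|_W is at least r(P) − s. -/

import Mathlib

open MvPolynomial

private lemma aux_totalDegree_aeval_le {k : Type*} [CommSemiring k] {σ τ : Type*}
    (w : σ → MvPolynomial τ k) (hw : ∀ i, (w i).totalDegree ≤ 1)
    (F : MvPolynomial σ k) : (aeval w F).totalDegree ≤ F.totalDegree := by
  conv_lhs => rw [F.as_sum, map_sum]
  refine (totalDegree_finset_sum _ _).trans (Finset.sup_le fun μ hμ => ?_)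
  rw [aeval_monomial]
  refine (totalDegree_mul _ _).trans ?_
  have h1 : (algebraMap k (MvPolynomial τ k) (coeff μ F)).totalDegree = 0 := totalDegree_C _
  rw [h1, zero_add]
  refine le_trans ?_ (le_totalDegree hμ)
  rw [Finsupp.prod]
  refine (totalDegree_finset_prod _ _).trans ?_
  calc ∑ i ∈ μ.support, ((w i) ^ μ i).totalDegree
      ≤ ∑ i ∈ μ.support, μ i * 1 := Finset.sum_le_sum fun i _ =>
        (totalDegree_pow _ _).trans (Nat.mul_le_mul_left _ (hw i))
    _ = μ.sum fun _ e => e := by simp [Finsupp.sum]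

private lemma aux_deg_affine {k σ : Type*} [CommSemiring k] [Fintype σ]
    (a : σ → k) (b : k) :
    ((∑ j : σ, MvPolynomial.C (a j) * MvPolynomial.X j) + MvPolynomial.C b).totalDegree ≤ 1 := by
  refine (MvPolynomial.totalDegree_add _ _).trans ?_
  rw [max_le_iff]
  constructor
  · refine (MvPolynomial.totalDegree_finset_sum _ _).trans (Finset.sup_le fun j _ => ?_)
    refine (MvPolynomial.totalDegree_mul _ _).trans ?_
    have : (MvPolynomial.X j : MvPolynomial σ k).totalDegree ≤ 1 := by
      refine (MvPolynomial.totalDegree_monomial_le _ _).trans_eq ?_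
      · simp
    simpa [MvPolynomial.totalDegree_C] using this
  · simp [MvPolynomial.totalDegree_C]

private lemma aux_sum_mul {k : Type*} [CommSemiring k] {N M : Type*} [Fintype N] [DecidableEq N]
    (L : (N → k) →ₗ[k] (M → k)) (y : N → k) (i : M) :
    ∑ j, y j * L (Pi.single j 1) i = L y i := by
  rw [LinearMap.pi_apply_eq_sum_univ L y, Finset.sum_apply]
  refine Finset.sum_congr rfl fun j _ => ?_
  rw [Pi.smul_apply, smul_eq_mul]
  have : (fun j' => if j = j' then (1:k) else 0) = Pi.single j 1 := by
    funext j'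
    simp [Pi.single_apply, eq_comm]
  rw [this]

open MvPolynomial

private lemma aux_div {k : Type*} [CommRing k] {m s : ℕ} (d : ℕ)
    (F : MvPolynomial (Fin (m+s)) k)
    (h0 : aeval (Fin.addCases (fun j => (X j : MvPolynomial (Fin m) k)) (fun _ => 0)) F = 0)
    (hdeg : F.totalDegree ≤ d) :
    ∃ G : Fin s → MvPolynomial (Fin (m+s)) k,
      F = ∑ t, X (Fin.natAdd m t) * G t ∧ ∀ t, (G t).totalDegree ≤ d - 1 := by
  classical
  set v : Fin (m+s) → MvPolynomial (Fin m) k :=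
    Fin.addCases (fun j => X j) (fun _ => 0) with hv
  set pull : (Fin (m+s) →₀ ℕ) → (Fin m →₀ ℕ) :=
    fun μ => Finsupp.equivFunOnFinite.symm (fun j => μ (Fin.castAdd s j)) with hpull
  have hterm : ∀ μ : Fin (m+s) →₀ ℕ, ∀ cc : k,
      aeval v (monomial μ cc) =
      if ∀ t : Fin s, μ (Fin.natAdd m t) = 0 then monomial (pull μ) cc else 0 := by
    intro μ cc
    rw [aeval_monomial, Finsupp.prod_pow, Fin.prod_univ_add]
    by_cases hp : ∀ t : Fin s, μ (Fin.natAdd m t) = 0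
    · rw [if_pos hp]
      have h2 : (∏ t : Fin s, v (Fin.natAdd m t) ^ μ (Fin.natAdd m t)) = 1 := by
        apply Finset.prod_eq_one
        intro t _
        rw [hp t, pow_zero]
      have h1 : (∏ j : Fin m, v (Fin.castAdd s j) ^ μ (Fin.castAdd s j))
          = monomial (pull μ) 1 := by
        rw [monomial_eq, Finsupp.prod_pow]
        simp [hv, hpull]
      rw [h2, mul_one, h1, algebraMap_eq, C_mul_monomial, mul_one]
    · rw [if_neg hp]
      push_neg at hp
      obtain ⟨t, ht⟩ := hp
      have hz : v (Fin.natAdd m t) ^ μ (Fin.natAdd m t) = 0 := by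
        simp [hv, zero_pow ht]
      rw [Finset.prod_eq_zero (Finset.mem_univ t) hz, mul_zero, mul_zero]
  have step1 : ∀ μ ∈ F.support, ∃ t : Fin s, μ (Fin.natAdd m t) ≠ 0 := by
    intro μ₀ hμ₀
    by_contra hpure
    push_neg at hpure
    have hcoeff : coeff (pull μ₀) (aeval v F) = coeff μ₀ F := by
      conv_lhs => rw [F.as_sum, map_sum]
      rw [coeff_sum]
      rw [Finset.sum_eq_single_of_mem μ₀ hμ₀]
      · rw [hterm, if_pos hpure, coeff_monomial, if_pos rfl]
      · intro μ hμ hne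
        rw [hterm]
        by_cases hp : ∀ t : Fin s, μ (Fin.natAdd m t) = 0
        · rw [if_pos hp, coeff_monomial, if_neg]
          intro hpp
          apply hne
          have hfun : (fun j => μ (Fin.castAdd s j)) = (fun j => μ₀ (Fin.castAdd s j)) :=
            Finsupp.equivFunOnFinite.symm.injective hpp
          ext i
          refine Fin.addCases (fun j => ?_) (fun t => ?_) i
          · exact congrFun hfun j
          · rw [hp t, hpure t]
        · rw [if_neg hp, coeff_zero]
    rw [h0, coeff_zero] at hcoeff
    exact (mem_support_iff.mp hμ₀) hcoeff.symm
  by_cases hF : F = 0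
  · exact ⟨fun _ => 0, by simp [hF], fun t => by simp⟩
  obtain ⟨μ₁, hμ₁⟩ := support_nonempty.mpr hF
  obtain ⟨t₀, _⟩ := step1 μ₁ hμ₁
  set g : (Fin (m+s) →₀ ℕ) → Fin s :=
    fun μ => if h : ∃ t : Fin s, μ (Fin.natAdd m t) ≠ 0 then h.choose else t₀ with hg
  have hfiber : ∀ t : Fin s, ∀ μ ∈ F.support.filter (fun μ => g μ = t),
      Finsupp.single (Fin.natAdd m t) 1 + (μ - Finsupp.single (Fin.natAdd m t) 1) = μ := by
    intro t μ hμ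
    rw [Finset.mem_filter] at hμ
    obtain ⟨hμs, hgt⟩ := hμ
    have hex : ∃ t : Fin s, μ (Fin.natAdd m t) ≠ 0 := step1 μ hμs
    simp only [hg] at hgt
    rw [dif_pos hex] at hgt
    have hne : μ (Fin.natAdd m t) ≠ 0 := hgt ▸ hex.choose_spec
    exact add_tsub_cancel_of_le (Finsupp.single_le_iff.mpr (by omega))
  set G : Fin s → MvPolynomial (Fin (m+s)) k := fun t =>
    ∑ μ ∈ F.support.filter (fun μ => g μ = t),
      monomial (μ - Finsupp.single (Fin.natAdd m t) 1) (coeff μ F) with hG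
  refine ⟨G, ?_, ?_⟩
  · conv_lhs => rw [F.as_sum]
    rw [← Finset.sum_fiberwise_of_maps_to (g := g) (fun μ _ => Finset.mem_univ (g μ))
        (fun μ => monomial μ (coeff μ F))]
    refine Finset.sum_congr rfl fun t _ => ?_
    rw [hG, Finset.mul_sum]
    refine Finset.sum_congr rfl fun μ hμ => ?_
    have hX : (X (Fin.natAdd m t) : MvPolynomial (Fin (m+s)) k)
        = monomial (Finsupp.single (Fin.natAdd m t) 1) 1 := by
      rw [← X_pow_eq_monomial, pow_one]
    rw [hX, monomial_mul, one_mul, hfiber t μ hμ]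
  · intro t
    rw [hG]
    refine (totalDegree_finset_sum _ _).trans (Finset.sup_le fun μ hμ => ?_)
    refine (totalDegree_monomial_le _ _).trans ?_
    have hμs : μ ∈ F.support := (Finset.mem_filter.mp hμ).1
    have hμd : (μ.sum fun _ e => e) ≤ d := (le_totalDegree hμs).trans hdeg
    have heq : ((Finsupp.single (Fin.natAdd m t) 1
        + (μ - Finsupp.single (Fin.natAdd m t) 1)).sum fun _ e => e) = μ.sum fun _ e => e := by
      rw [hfiber t μ hμ]
    rw [Finsupp.sum_add_index' (fun _ => rfl) (fun _ _ _ => rfl),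
      Finsupp.sum_single_index rfl] at heq
    simp only [Finsupp.sum, id] at hμd heq ⊢
    omega

open MvPolynomial

private lemma aux_T {k : Type*} [Field k] {m s : ℕ}
    (A : (Fin m → k) →ₗ[k] (Fin (m+s) → k)) (hA : Function.Injective A) :
    ∃ (T S : (Fin (m+s) → k) →ₗ[k] (Fin (m+s) → k)),
      (∀ j : Fin m, T (Pi.single (Fin.castAdd s j) 1) = A (Pi.single j 1)) ∧
      ∀ z, T (S z) = z := by
  classical
  obtain ⟨U', hU'⟩ := Submodule.exists_isCompl (LinearMap.range A)
  have hrank : Module.finrank k U' = s := by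
    have h1 := Submodule.finrank_add_eq_of_isCompl hU'
    rw [LinearMap.finrank_range_of_inj hA, Module.finrank_fin_fun, Module.finrank_fin_fun] at h1
    omega
  set b : Module.Basis (Fin s) k U' := Module.finBasisOfFinrankEq k U' hrank with hb
  set g : (Fin s → k) →ₗ[k] (Fin (m+s) → k) :=
    U'.subtype ∘ₗ (b.equivFun.symm : (Fin s → k) ≃ₗ[k] U').toLinearMap with hg
  have hgmem : ∀ y, g y ∈ U' := fun y => (b.equivFun.symm y).2
  have hginj : Function.Injective g := by
    intro y y' h
    exact b.equivFun.symm.injective (Subtype.ext h)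
  set T : (Fin (m+s) → k) →ₗ[k] (Fin (m+s) → k) :=
    A ∘ₗ LinearMap.funLeft k k (Fin.castAdd s) + g ∘ₗ LinearMap.funLeft k k (Fin.natAdd m)
    with hT
  have hT1 : ∀ j : Fin m, T (Pi.single (Fin.castAdd s j) 1) = A (Pi.single j 1) := by
    intro j
    have h1 : (Pi.single (Fin.castAdd s j) (1:k)) ∘ Fin.castAdd s = Pi.single j 1 := by
      funext j'
      simp only [Function.comp_apply, Pi.single_apply]
      congr 1
      simp [Fin.ext_iff]
    have h2 : (Pi.single (Fin.castAdd s j) (1:k)) ∘ Fin.natAdd m = 0 := by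
      funext t
      simp only [Function.comp_apply, Pi.single_apply]
      rw [if_neg]
      · rfl
      · simp only [Fin.ext_iff]
        have := j.2
        simp only [Fin.coe_natAdd, Fin.coe_castAdd]
        omega
    simp only [hT, LinearMap.add_apply, LinearMap.comp_apply]
    have h1' : (LinearMap.funLeft k k (Fin.castAdd s)) (Pi.single (Fin.castAdd s j) (1:k))
        = Pi.single j 1 := h1
    have h2' : (LinearMap.funLeft k k (Fin.natAdd m)) (Pi.single (Fin.castAdd s j) (1:k))
        = (0 : Fin s → k) := h2
    rw [h1', h2', map_zero, add_zero]
  have hTinj : Function.Injective T := by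
    rw [← LinearMap.ker_eq_bot]
    rw [Submodule.eq_bot_iff]
    intro y hy
    have hy' : A (y ∘ Fin.castAdd s) + g (y ∘ Fin.natAdd m) = 0 := hy
    have hmem : A (y ∘ Fin.castAdd s) ∈ LinearMap.range A ⊓ U' := by
      constructor
      · exact ⟨_, rfl⟩
      · have : A (y ∘ Fin.castAdd s) = - g (y ∘ Fin.natAdd m) := by
          rw [eq_neg_iff_add_eq_zero]; exact hy'
        rw [this]
        exact neg_mem (hgmem _)
    rw [hU'.inf_eq_bot] at hmem
    have hA0 : y ∘ Fin.castAdd s = 0 := hA (by rw [hmem, map_zero])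
    have hg0 : y ∘ Fin.natAdd m = 0 := by
      apply hginj
      rw [map_zero]
      have := hy'
      rw [hmem, zero_add] at this
      exact this
    funext i
    refine Fin.addCases (fun j => ?_) (fun t => ?_) i
    · exact congrFun hA0 j
    · exact congrFun hg0 t
  have hTsurj : Function.Surjective T := LinearMap.injective_iff_surjective.mp hTinj
  set e := LinearEquiv.ofBijective T ⟨hTinj, hTsurj⟩ with he
  refine ⟨T, e.symm.toLinearMap, hT1, fun z => ?_⟩
  show T (e.symm z) = z
  have : T (e.symm z) = e (e.symm z) := rfl
  rw [this, e.apply_symm_apply]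

private lemma aux_eq_C {k σ : Type*} [CommSemiring k] {p : MvPolynomial σ k}
    (h : p.totalDegree = 0) : p = C (coeff 0 p) := by
  classical
  ext μ
  rw [coeff_C]
  by_cases hμ : (0 : σ →₀ ℕ) = μ
  · rw [if_pos hμ, ← hμ]
  · rw [if_neg hμ]
    by_contra hc
    have hs : μ ∈ p.support := mem_support_iff.mpr hc
    have h2 := (totalDegree_eq_zero_iff _ p).mp h μ hs
    apply hμ
    ext x
    simp [h2 x]

/-- The Schmidt rank (relative to degree `d`) of a polynomial: the minimal `r`
such that `P = Σ_{i=1}^r Q_i R_i` with `deg Q_i, deg R_i < d`. -/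
noncomputable def schmidtRank {k : Type*} [CommRing k] {σ : Type*} (d : ℕ)
    (P : MvPolynomial σ k) : ℕ :=
  sInf {r : ℕ | ∃ Q R : Fin r → MvPolynomial σ k,
    (∀ i, (Q i).totalDegree < d ∧ (R i).totalDegree < d) ∧ P = ∑ i, Q i * R i}

/-- over a finite field of characteristic `> d`, the Schmidt rank of
the restriction of a degree-`≤ d` polynomial `P` to an affine subspace `W` of
codimension `s` (parametrized by an injective affine map `x ↦ A x + c`) is at
least `r(P) − s`. -/
theorem stmt_8 {k : Type*} [Field k] [Fintype k] (q n m s d : ℕ)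
    (hq : Fintype.card k = q) (hchar : d < ringChar k)
    (hcodim : m + s = n)
    (P : MvPolynomial (Fin n) k) (hdeg : P.totalDegree ≤ d)
    (A : (Fin m → k) →ₗ[k] (Fin n → k)) (hA : Function.Injective A)
    (c : Fin n → k)
    (Psub : MvPolynomial (Fin m) k)
    (hPsub : Psub = MvPolynomial.aeval
      (fun i : Fin n =>
        (∑ j : Fin m, MvPolynomial.C (A (Pi.single j 1) i) * MvPolynomial.X j)
          + MvPolynomial.C (c i)) P) :
    schmidtRank d P - s ≤ schmidtRank d Psub := by
  classical
  subst hcodim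
  set PSet : Set ℕ := {r : ℕ | ∃ Q R : Fin r → MvPolynomial (Fin (m+s)) k,
    (∀ i, (Q i).totalDegree < d ∧ (R i).totalDegree < d) ∧ P = ∑ i, Q i * R i} with hPSet
  set SSet : Set ℕ := {r : ℕ | ∃ Q R : Fin r → MvPolynomial (Fin m) k,
    (∀ i, (Q i).totalDegree < d ∧ (R i).totalDegree < d) ∧ Psub = ∑ i, Q i * R i} with hSSet
  have hPrk : schmidtRank d P = sInf PSet := rfl
  have hSrk : schmidtRank d Psub = sInf SSet := rfl
  rw [hPrk, hSrk]
  by_cases hPne : PSet.Nonempty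
  swap
  · rw [Set.not_nonempty_iff_eq_empty] at hPne
    rw [hPne, Nat.sInf_empty]
    simp
  obtain ⟨r₀, Q₀, R₀, hQR₀, hP₀⟩ := hPne
  set ψw : Fin (m+s) → MvPolynomial (Fin m) k :=
    fun i => (∑ j : Fin m, C (A (Pi.single j 1) i) * X j) + C (c i) with hψw
  have hψdeg : ∀ i, (ψw i).totalDegree ≤ 1 := fun i => aux_deg_affine _ _
  have hPsub' : Psub = aeval ψw P := hPsub
  have hPsubdeg : Psub.totalDegree ≤ d := by
    rw [hPsub']
    exact (aux_totalDegree_aeval_le _ hψdeg P).trans hdeg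
  have hr₀ : r₀ ∈ SSet := by
    refine ⟨fun i => aeval ψw (Q₀ i), fun i => aeval ψw (R₀ i), fun i =>
      ⟨(aux_totalDegree_aeval_le _ hψdeg _).trans_lt (hQR₀ i).1,
       (aux_totalDegree_aeval_le _ hψdeg _).trans_lt (hQR₀ i).2⟩, ?_⟩
    rw [hPsub', hP₀, map_sum]
    simp only [map_mul]
  obtain ⟨Q, R, hQR, hsub⟩ := Nat.sInf_mem (⟨r₀, hr₀⟩ : SSet.Nonempty)
  suffices h : sInf PSet ≤ sInf SSet + s by omega
  rcases Nat.lt_or_ge d 2 with hd2 | hd2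
  · have hd01 : d = 0 ∨ d = 1 := by omega
    rcases hd01 with hd | hd
    · -- d = 0
      have hr0 : r₀ = 0 := by
        cases r₀ with
        | zero => rfl
        | succ n' => exact absurd (hQR₀ 0).1 (by omega)
      subst hr0
      have hP0 : P = 0 := by
        rw [hP₀]; simp
      have h0mem : (0:ℕ) ∈ PSet := ⟨fun i => i.elim0, fun i => i.elim0, fun i => i.elim0,
        by rw [hP0]; simp⟩
      exact (Nat.sInf_le h0mem).trans (Nat.zero_le _)
    · -- d = 1
      have hPdeg0 : P.totalDegree = 0 := by
        rw [hP₀]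
        refine Nat.le_zero.mp ((totalDegree_finset_sum _ _).trans (Finset.sup_le fun i _ => ?_))
        have h1 := (hQR₀ i).1
        have h2 := (hQR₀ i).2
        exact (totalDegree_mul _ _).trans (by omega)
      clear hd
      have hPC : P = C (coeff 0 P) := aux_eq_C hPdeg0
      have hPsubC : Psub = C (coeff 0 P) := by
        rw [hPsub']
        conv_lhs => rw [hPC]
        rw [aeval_C, algebraMap_eq]
      set θ : Fin m → MvPolynomial (Fin (m+s)) k := fun _ => 0 with hθ
      have hθdeg : ∀ i, (θ i).totalDegree ≤ 1 := fun i => by simp [hθ]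
      have hmem : sInf SSet ∈ PSet := by
        refine ⟨fun i => aeval θ (Q i), fun i => aeval θ (R i), fun i =>
          ⟨(aux_totalDegree_aeval_le _ hθdeg _).trans_lt (hQR i).1,
           (aux_totalDegree_aeval_le _ hθdeg _).trans_lt (hQR i).2⟩, ?_⟩
        have hPθ : P = aeval θ Psub := by
          rw [hPsubC, aeval_C, algebraMap_eq, ← hPC]
        rw [hPθ, hsub, map_sum]
        simp only [map_mul]
      exact (Nat.sInf_le hmem).trans (Nat.le_add_right _ _)
  · -- main case d ≥ 2
    obtain ⟨T, S, hT1, hTS⟩ := aux_T A hA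
    set v : Fin (m+s) → MvPolynomial (Fin m) k :=
      Fin.addCases (fun j => X j) (fun _ => 0) with hv
    set w₁ : Fin (m+s) → MvPolynomial (Fin (m+s)) k :=
      fun i => (∑ j, C (T (Pi.single j 1) i) * X j) + C (c i) with hw₁
    set w₂ : Fin (m+s) → MvPolynomial (Fin (m+s)) k :=
      fun i => (∑ j, C (S (Pi.single j 1) i) * X j) + C (-(S c i)) with hw₂
    have hw₁deg : ∀ i, (w₁ i).totalDegree ≤ 1 := fun i => aux_deg_affine _ _
    have hw₂deg : ∀ i, (w₂ i).totalDegree ≤ 1 := fun i => aux_deg_affine _ _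
    have hsub1 : ∀ i, aeval v (w₁ i) = ψw i := by
      intro i
      simp only [hw₁, map_add, map_sum, map_mul, aeval_C, aeval_X]
      rw [Fin.sum_univ_add]
      simp only [hv, Fin.addCases_left, Fin.addCases_right, mul_zero,
        Finset.sum_const_zero, add_zero, hT1, hψw, algebraMap_eq]
    have hK1 : aeval v (aeval w₁ P) = Psub := by
      have hc : ((aeval v).comp (aeval w₁) :
          MvPolynomial (Fin (m+s)) k →ₐ[k] MvPolynomial (Fin m) k) = aeval ψw := by
        rw [comp_aeval]
        congr 1
        funext i
        exact hsub1 i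
      calc aeval v (aeval w₁ P) = ((aeval v).comp (aeval w₁)) P := rfl
        _ = aeval ψw P := by rw [hc]
        _ = Psub := hPsub'.symm
    have hsub2 : ∀ i, aeval w₂ (w₁ i) = X i := by
      intro i
      simp only [hw₁, map_add, map_sum, map_mul, aeval_C, aeval_X, algebraMap_eq]
      have expand : ∀ j : Fin (m+s),
          (C (T (Pi.single j 1) i) : MvPolynomial (Fin (m+s)) k) * w₂ j =
          (∑ l, C (T (Pi.single j 1) i * S (Pi.single l 1) j) * X l)
            + C (T (Pi.single j 1) i * (-(S c j))) := by
        intro j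
        rw [hw₂, mul_add, Finset.mul_sum, ← C_mul]
        congr 1
        refine Finset.sum_congr rfl fun l _ => by rw [← mul_assoc, ← C_mul]
      rw [Finset.sum_congr rfl (fun j _ => expand j), Finset.sum_add_distrib, Finset.sum_comm]
      have hfst : ∀ l : Fin (m+s),
          (∑ j, C (T (Pi.single j 1) i * S (Pi.single l 1) j) * X l :
            MvPolynomial (Fin (m+s)) k) = C ((Pi.single l (1:k) : Fin (m+s) → k) i) * X l := by
        intro l
        rw [← Finset.sum_mul, ← map_sum]
        congr 2
        calc ∑ j, T (Pi.single j 1) i * S (Pi.single l 1) j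
            = ∑ j, S (Pi.single l 1) j * T (Pi.single j 1) i :=
              Finset.sum_congr rfl fun j _ => mul_comm _ _
          _ = T (S (Pi.single l 1)) i := aux_sum_mul T (S (Pi.single l 1)) i
          _ = (Pi.single l (1:k) : Fin (m+s) → k) i := by rw [hTS]
      have hsnd : (∑ j, C (T (Pi.single j 1) i * (-(S c j))) :
          MvPolynomial (Fin (m+s)) k) = C (- c i) := by
        rw [← map_sum]
        congr 1
        have hstep : ∀ j : Fin (m+s), T (Pi.single j 1) i * (-(S c j))
            = -(S c j * T (Pi.single j 1) i) := fun j => by ring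
        rw [Finset.sum_congr rfl (fun j _ => hstep j), Finset.sum_neg_distrib]
        rw [aux_sum_mul T (S c) i, hTS]
      rw [Finset.sum_congr rfl (fun l _ => hfst l), hsnd]
      rw [Finset.sum_eq_single i]
      · rw [Pi.single_eq_same, C_1, one_mul, add_assoc, ← C_add, neg_add_cancel, C_0, add_zero]
      · intro l _ hl
        rw [Pi.single_eq_of_ne (Ne.symm hl), C_0, zero_mul]
      · intro h
        exact absurd (Finset.mem_univ i) h
    have hK2 : aeval w₂ (aeval w₁ P) = P := by
      calc aeval w₂ (aeval w₁ P) = ((aeval w₂).comp (aeval w₁)) P := rfl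
        _ = aeval (fun i => aeval w₂ (w₁ i)) P := by rw [comp_aeval]
        _ = aeval X P := by rw [show (fun i => aeval w₂ (w₁ i)) = X from funext hsub2]
        _ = P := aeval_X_left_apply P
    have hK3 : ∀ PP : MvPolynomial (Fin m) k, aeval v (rename (Fin.castAdd s) PP) = PP := by
      intro PP
      rw [aeval_rename]
      have hvx : v ∘ Fin.castAdd s = X := funext fun j => by simp [hv]
      rw [hvx]
      exact aeval_X_left_apply PP
    set F : MvPolynomial (Fin (m+s)) k := aeval w₁ P - rename (Fin.castAdd s) Psub with hF
    have hF0 : aeval v F = 0 := by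
      rw [hF, map_sub, hK1, hK3, sub_self]
    have hFdeg : F.totalDegree ≤ d := by
      rw [hF, sub_eq_add_neg]
      refine (totalDegree_add _ _).trans (max_le ?_ ?_)
      · exact (aux_totalDegree_aeval_le _ hw₁deg P).trans hdeg
      · rw [totalDegree_neg]
        exact (totalDegree_rename_le _ _).trans hPsubdeg
    obtain ⟨G, hFeq, hGdeg⟩ := aux_div d F hF0 hFdeg
    have hP₁ : aeval w₁ P = rename (Fin.castAdd s) Psub + ∑ t, X (Fin.natAdd m t) * G t := by
      rw [← hFeq, hF]; ring
    set Q' : Fin (sInf SSet + s) → MvPolynomial (Fin (m+s)) k :=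
      Fin.addCases (fun i => aeval w₂ (rename (Fin.castAdd s) (Q i)))
        (fun t => aeval w₂ (X (Fin.natAdd m t) : MvPolynomial (Fin (m+s)) k)) with hQ'
    set R' : Fin (sInf SSet + s) → MvPolynomial (Fin (m+s)) k :=
      Fin.addCases (fun i => aeval w₂ (rename (Fin.castAdd s) (R i)))
        (fun t => aeval w₂ (G t)) with hR'
    have hmem : sInf SSet + s ∈ PSet := by
      refine ⟨Q', R', fun i => ?_, ?_⟩
      · refine Fin.addCases
          (motive := fun i => (Q' i).totalDegree < d ∧ (R' i).totalDegree < d) ?_ ?_ i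
        · intro i
          simp only [hQ', hR', Fin.addCases_left]
          exact ⟨(aux_totalDegree_aeval_le _ hw₂deg _).trans_lt
              ((totalDegree_rename_le _ _).trans_lt (hQR i).1),
            (aux_totalDegree_aeval_le _ hw₂deg _).trans_lt
              ((totalDegree_rename_le _ _).trans_lt (hQR i).2)⟩
        · intro t
          simp only [hQ', hR', Fin.addCases_right]
          constructor
          · refine (aux_totalDegree_aeval_le _ hw₂deg _).trans_lt ?_
            have hX : (X (Fin.natAdd m t) : MvPolynomial (Fin (m+s)) k).totalDegree = 1 :=
              totalDegree_X _
            omega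
          · exact (aux_totalDegree_aeval_le _ hw₂deg _).trans_lt
              (lt_of_le_of_lt (hGdeg t) (by omega))
      · calc P = aeval w₂ (aeval w₁ P) := hK2.symm
          _ = aeval w₂ (rename (Fin.castAdd s) Psub)
              + ∑ t, aeval w₂ (X (Fin.natAdd m t) : MvPolynomial (Fin (m+s)) k) * aeval w₂ (G t) := by
            rw [hP₁, map_add, map_sum]
            simp only [map_mul]
          _ = (∑ i, aeval w₂ (rename (Fin.castAdd s) (Q i))
                * aeval w₂ (rename (Fin.castAdd s) (R i)))
              + ∑ t, aeval w₂ (X (Fin.natAdd m t) : MvPolynomial (Fin (m+s)) k) * aeval w₂ (G t) := by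
            rw [hsub, map_sum, map_sum]
            simp only [map_mul]
          _ = ∑ i, Q' i * R' i := by
            rw [Fin.sum_univ_add]
            simp only [hQ', hR', Fin.addCases_left, Fin.addCases_right]
    exact Nat.sInf_le hmem
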